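/- Let P be a locally finite partially ordered set, x < y in P, and Q, Q' ⊆ P subsets complementing the interval [x,y]_P. Write t⁻¹ for the substitution t_z ↦ t_z^{−1} (z ∈ P) in A_P. Then Inv_Q θ (x, y; t) = −(t_y/t_x) · Inv_{Q'} θ (x, y; t⁻¹), i.e., the (x,y)-entry of the inverse of θ restricted to Q equals minus t_y/t_x times the image under the substitution t ↦ t⁻¹ of the (x,y)-entry of the inverse of θ restricted to Q'. -/

import Mathlib

open Finset
open scoped Classical

variable {P A : Type*}

/-- The zeta function of a poset, as an element of its incidence algebra. -/
noncomputable def zeta [PartialOrder P] [CommRing A] : P → P → A :=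
  fun x y => if x ≤ y then 1 else 0

/-- `IsInvOn Q ε η` says that `η` represents the inverse `Inv_Q ε` of the restriction
`ε|_{Q×Q}` of `ε` in the incidence algebra `I_A(Q)` of the subposet `Q ⊆ P`.
Elements of `I_A(Q)` are encoded as functions `P → P → A` supported on pairs
`x ≤ y` with `x, y ∈ Q`; convolution over `Q` is the sum over `z ∈ [x,y]_Q`,
and the unit of `I_A(Q)` is the Kronecker delta on `Q`. -/
noncomputable def IsInvOn [PartialOrder P] [LocallyFiniteOrder P] [CommRing A]
    (Q : Set P) (ε η : P → P → A) : Prop :=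
  (∀ x y, ¬(x ∈ Q ∧ y ∈ Q ∧ x ≤ y) → η x y = 0) ∧
  (∀ x ∈ Q, ∀ y ∈ Q,
    ∑ z ∈ (Finset.Icc x y).filter (· ∈ Q), ε x z * η z y = if x = y then 1 else 0) ∧
  (∀ x ∈ Q, ∀ y ∈ Q,
    ∑ z ∈ (Finset.Icc x y).filter (· ∈ Q), η x z * ε z y = if x = y then 1 else 0)

/-- The Laurent polynomial algebra `A_P = ℚ[t_x^{±1} : x ∈ P]`, realized as the monoid
algebra of `ℚ` over the additive group of finitely supported exponent vectors `P →₀ ℤ`. -/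
abbrev AP (P : Type*) : Type _ := AddMonoidAlgebra ℚ (P →₀ ℤ)

/-- The exponent vector of the variable `t_x`. -/
noncomputable def tv (x : P) : P →₀ ℤ := Finsupp.single x 1

/-- The element `θ(x,y) = Σ_{x ≤ z ≤ y} μ(z,y) · t_z/t_x` of `I_{A_P}(P)`,
where `mob` is the Möbius function of `P`. -/
noncomputable def theta [PartialOrder P] [LocallyFiniteOrder P]
    (mob : P → P → ℚ) (x y : P) : AP P :=
  ∑ z ∈ Finset.Icc x y, mob z y • AddMonoidAlgebra.single (tv z - tv x) (1 : ℚ)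

section RecInv

variable [PartialOrder P] [LocallyFiniteOrder P] [CommRing A]

lemma card_lt_of_mem_Ioc {u v z : P} (hz : z ∈ Finset.Ioc u v) :
    (Finset.Icc z v).card < (Finset.Icc u v).card := by
  rw [Finset.mem_Ioc] at hz
  apply Finset.card_lt_card
  rw [Finset.ssubset_iff_of_subset (fun w hw => ?_)]
  · exact ⟨u, Finset.mem_Icc.mpr ⟨le_refl u, hz.1.le.trans hz.2⟩,
      fun hu => absurd (Finset.mem_Icc.mp hu).1 (not_le_of_gt hz.1)⟩
  · rw [Finset.mem_Icc] at hw ⊢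
    exact ⟨hz.1.le.trans hw.1, hw.2⟩

noncomputable def recInv (Q : Set P) (ε : P → P → A) (u v : P) : A :=
  if u = v then 1
  else -∑ z ∈ (Finset.Ioc u v).attach,
        if (z : P) ∈ Q then ε u z * recInv Q ε z v else 0
  termination_by (Finset.Icc u v).card
  decreasing_by exact card_lt_of_mem_Ioc z.2

lemma recInv_self (Q : Set P) (ε : P → P → A) (u : P) : recInv Q ε u u = 1 := by
  rw [recInv]; simp

lemma recInv_eq (Q : Set P) (ε : P → P → A) {u v : P} (h : u ≠ v) :
    recInv Q ε u v
      = -∑ z ∈ (Finset.Ioc u v).filter (· ∈ Q), ε u z * recInv Q ε z v := by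
  rw [recInv, if_neg h]
  congr 1
  rw [Finset.sum_filter, ← Finset.sum_attach (Finset.Ioc u v)
    (fun z => if z ∈ Q then ε u z * recInv Q ε z v else 0)]

lemma recInv_recurrence (Q : Set P) (ε : P → P → A) {u v : P} (huv : u ≤ v) :
    recInv Q ε u v + ∑ z ∈ (Finset.Ioc u v).filter (· ∈ Q), ε u z * recInv Q ε z v
      = if u = v then 1 else 0 := by
  by_cases h : u = v
  · subst h; simp [recInv_self]
  · rw [recInv_eq Q ε h, if_neg h]; ring

lemma recInv_congr (Q R : Set P) (ε : P → P → A) (u v : P)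
    (h : ∀ z ∈ Finset.Ioc u v, (z ∈ Q ↔ z ∈ R)) :
    recInv Q ε u v = recInv R ε u v := by
  by_cases huv : u = v
  · subst huv; rw [recInv_self, recInv_self]
  · rw [recInv_eq Q ε huv, recInv_eq R ε huv]
    have hf : (Finset.Ioc u v).filter (· ∈ Q) = (Finset.Ioc u v).filter (· ∈ R) :=
      Finset.filter_congr (fun z hz => by simpa using h z hz)
    rw [hf]
    congr 1
    apply Finset.sum_congr rfl
    intro z hz
    obtain ⟨hz1, hz2⟩ := Finset.mem_filter.mp hz
    have hz3 := Finset.mem_Ioc.mp hz1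
    have hsub : ∀ s ∈ Finset.Ioc z v, (s ∈ Q ↔ s ∈ R) := by
      intro s hs
      have hs' := Finset.mem_Ioc.mp hs
      exact h s (Finset.mem_Ioc.mpr ⟨hz3.1.trans hs'.1, hs'.2⟩)
    rw [recInv_congr Q R ε z v hsub]
  termination_by (Finset.Icc u v).card
  decreasing_by exact card_lt_of_mem_Ioc hz1

lemma filter_Icc_erase {u v : P} (Q : Set P) (huv : u ≤ v) :
    ((Finset.Icc u v).filter (· ∈ Q)).erase u = (Finset.Ioc u v).filter (· ∈ Q) := by
  ext z
  simp only [Finset.mem_erase, Finset.mem_filter, Finset.mem_Icc, Finset.mem_Ioc]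
  constructor
  · rintro ⟨hne, ⟨h1, h2⟩, hQ⟩
    exact ⟨⟨lt_of_le_of_ne h1 (Ne.symm hne), h2⟩, hQ⟩
  · rintro ⟨⟨h1, h2⟩, hQ⟩
    exact ⟨(ne_of_lt h1).symm, ⟨h1.le, h2⟩, hQ⟩

lemma eq_recInv (Q : Set P) (ε η : P → P → A) (hd : ∀ z ∈ Q, ε z z = 1)
    (hsum : ∀ u ∈ Q, ∀ v ∈ Q, u ≤ v →
      ∑ z ∈ (Finset.Icc u v).filter (· ∈ Q), ε u z * η z v = if u = v then 1 else 0)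
    (u v : P) (hu : u ∈ Q) (hv : v ∈ Q) (huv : u ≤ v) :
    η u v = recInv Q ε u v := by
  have hsum' := hsum u hu v hv huv
  have hu' : u ∈ (Finset.Icc u v).filter (· ∈ Q) :=
    Finset.mem_filter.mpr ⟨Finset.mem_Icc.mpr ⟨le_refl u, huv⟩, hu⟩
  rw [← Finset.add_sum_erase _ _ hu', filter_Icc_erase Q huv, hd u hu, one_mul] at hsum'
  have hrec : ∑ z ∈ (Finset.Ioc u v).filter (· ∈ Q), ε u z * η z v
      = ∑ z ∈ (Finset.Ioc u v).filter (· ∈ Q), ε u z * recInv Q ε z v := by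
    apply Finset.sum_congr rfl
    intro z hz
    obtain ⟨hz1, hz2⟩ := Finset.mem_filter.mp hz
    rw [eq_recInv Q ε η hd hsum z v hz2 hv (Finset.mem_Ioc.mp hz1).2]
  by_cases h : u = v
  · subst h
    simp only [Finset.Ioc_self, Finset.filter_empty, Finset.sum_empty, add_zero, if_pos rfl] at hsum'
    rw [recInv_self, hsum']
    simp
  · rw [recInv_eq Q ε h]
    rw [hrec, if_neg h] at hsum'
    linear_combination hsum'
  termination_by (Finset.Icc u v).card
  decreasing_by exact card_lt_of_mem_Ioc hz1

lemma sum_Icc_Icc_comm (u v : P) (g : P → P → A) :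
    ∑ z ∈ Finset.Icc u v, ∑ w ∈ Finset.Icc u z, g w z
      = ∑ w ∈ Finset.Icc u v, ∑ z ∈ Finset.Icc w v, g w z := by
  have h1 : ∀ z ∈ Finset.Icc u v,
      ∑ w ∈ Finset.Icc u z, g w z = ∑ w ∈ Finset.Icc u v, if w ≤ z then g w z else 0 := by
    intro z hz
    rw [Finset.mem_Icc] at hz
    rw [← Finset.sum_filter]
    congr 1
    ext w
    simp only [Finset.mem_filter, Finset.mem_Icc]
    exact ⟨fun hw => ⟨⟨hw.1, hw.2.trans hz.2⟩, hw.2⟩, fun hw => ⟨hw.1.1, hw.2⟩⟩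
  have h2 : ∀ w ∈ Finset.Icc u v,
      ∑ z ∈ Finset.Icc w v, g w z = ∑ z ∈ Finset.Icc u v, if w ≤ z then g w z else 0 := by
    intro w hw
    rw [Finset.mem_Icc] at hw
    rw [← Finset.sum_filter]
    congr 1
    ext z
    simp only [Finset.mem_filter, Finset.mem_Icc]
    exact ⟨fun hz => ⟨⟨hw.1.trans hz.1, hz.2⟩, hz.1⟩, fun hz => ⟨hz.2, hz.1.2⟩⟩
  rw [Finset.sum_congr rfl h1, Finset.sum_congr rfl h2, Finset.sum_comm]

end RecInv

section Mob
variable [PartialOrder P] [LocallyFiniteOrder P] (mob : P → P → ℚ)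

/-- θ̄(u,v) = Σ μ(z,v) t_v/t_z. -/
noncomputable def thetaBar (u v : P) : AP P :=
  ∑ z ∈ Finset.Icc u v, mob z v • AddMonoidAlgebra.single (tv v - tv z) (1 : ℚ)

variable {mob}

lemma mob_self (hmob : IsInvOn Set.univ zeta mob) (z : P) : mob z z = 1 := by
  have := hmob.2.1 z (Set.mem_univ z) z (Set.mem_univ z)
  simpa [zeta] using this

lemma sum_mob_right (hmob : IsInvOn Set.univ zeta mob) {a b : P} (hab : a ≤ b) :
    ∑ z ∈ Finset.Icc a b, mob z b = if a = b then 1 else 0 := by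
  have h := hmob.2.1 a (Set.mem_univ a) b (Set.mem_univ b)
  simp only [Set.mem_univ, Finset.filter_true] at h
  rw [← h]
  apply Finset.sum_congr rfl
  intro z hz
  rw [zeta, if_pos (Finset.mem_Icc.mp hz).1, one_mul]

lemma sum_mob_left (hmob : IsInvOn Set.univ zeta mob) {a b : P} (hab : a ≤ b) :
    ∑ z ∈ Finset.Icc a b, mob a z = if a = b then 1 else 0 := by
  have h := hmob.2.2 a (Set.mem_univ a) b (Set.mem_univ b)
  simp only [Set.mem_univ, Finset.filter_true] at h
  rw [← h]
  apply Finset.sum_congr rfl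
  intro z hz
  rw [zeta, if_pos (Finset.mem_Icc.mp hz).2, mul_one]

lemma theta_self (hmob : IsInvOn Set.univ zeta mob) (z : P) : theta mob z z = 1 := by
  rw [theta, Finset.Icc_self, Finset.sum_singleton, mob_self hmob, one_smul, sub_self,
    AddMonoidAlgebra.one_def]

lemma thetaBar_self (hmob : IsInvOn Set.univ zeta mob) (z : P) : thetaBar mob z z = 1 := by
  rw [thetaBar, Finset.Icc_self, Finset.sum_singleton, mob_self hmob, one_smul, sub_self,
    AddMonoidAlgebra.one_def]

lemma theta_conv (hmob : IsInvOn Set.univ zeta mob) {u v : P} (huv : u ≤ v) :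
    ∑ z ∈ Finset.Icc u v, theta mob u z * thetaBar mob z v
      = if u = v then (1 : AP P) else 0 := by
  have step1 : ∑ z ∈ Finset.Icc u v, theta mob u z * thetaBar mob z v
      = ∑ w ∈ Finset.Icc u v, ∑ z ∈ Finset.Icc w v,
          (mob w z • AddMonoidAlgebra.single (tv w - tv u) (1:ℚ)) * thetaBar mob z v := by
    rw [← sum_Icc_Icc_comm u v]
    apply Finset.sum_congr rfl
    intro z _
    rw [theta, Finset.sum_mul]
  rw [step1]
  have step2 : ∀ w ∈ Finset.Icc u v, ∑ z ∈ Finset.Icc w v,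
      (mob w z • AddMonoidAlgebra.single (tv w - tv u) (1:ℚ)) * thetaBar mob z v
      = mob w v • (AddMonoidAlgebra.single (tv w - tv u) (1:ℚ)
          * AddMonoidAlgebra.single (tv v - tv w) (1:ℚ)) := by
    intro w hw
    have hwv : w ≤ v := (Finset.mem_Icc.mp hw).2
    have swap : ∑ z ∈ Finset.Icc w v, ∑ s ∈ Finset.Icc z v,
        (mob w z * mob s v) • (AddMonoidAlgebra.single (tv w - tv u) (1:ℚ)
            * AddMonoidAlgebra.single (tv v - tv s) (1:ℚ))
        = ∑ s ∈ Finset.Icc w v, ∑ z ∈ Finset.Icc w s,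
        (mob w z * mob s v) • (AddMonoidAlgebra.single (tv w - tv u) (1:ℚ)
            * AddMonoidAlgebra.single (tv v - tv s) (1:ℚ)) := by
      exact (sum_Icc_Icc_comm w v (fun z s => (mob w z * mob s v) •
        (AddMonoidAlgebra.single (tv w - tv u) (1:ℚ)
          * AddMonoidAlgebra.single (tv v - tv s) (1:ℚ)))).symm
    calc ∑ z ∈ Finset.Icc w v,
        (mob w z • AddMonoidAlgebra.single (tv w - tv u) (1:ℚ)) * thetaBar mob z v
        = ∑ z ∈ Finset.Icc w v, ∑ s ∈ Finset.Icc z v,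
            (mob w z * mob s v) • (AddMonoidAlgebra.single (tv w - tv u) (1:ℚ)
              * AddMonoidAlgebra.single (tv v - tv s) (1:ℚ)) := by
          apply Finset.sum_congr rfl
          intro z _
          rw [thetaBar, Finset.mul_sum]
          apply Finset.sum_congr rfl
          intro s _
          rw [smul_mul_smul_comm]
      _ = ∑ s ∈ Finset.Icc w v, ∑ z ∈ Finset.Icc w s,
            (mob w z * mob s v) • (AddMonoidAlgebra.single (tv w - tv u) (1:ℚ)
              * AddMonoidAlgebra.single (tv v - tv s) (1:ℚ)) := swap
      _ = ∑ s ∈ Finset.Icc w v, (if w = s then mob s v else 0) •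
            (AddMonoidAlgebra.single (tv w - tv u) (1:ℚ)
              * AddMonoidAlgebra.single (tv v - tv s) (1:ℚ)) := by
          apply Finset.sum_congr rfl
          intro s hs
          rw [← Finset.sum_smul, ← Finset.sum_mul,
            sum_mob_left hmob (Finset.mem_Icc.mp hs).1]
          by_cases h : w = s <;> simp [h]
      _ = mob w v • (AddMonoidAlgebra.single (tv w - tv u) (1:ℚ)
              * AddMonoidAlgebra.single (tv v - tv w) (1:ℚ)) := by
          simp only [ite_smul, zero_smul]
          rw [Finset.sum_ite_eq _ w (fun s => mob s v •
            (AddMonoidAlgebra.single (tv w - tv u) (1:ℚ)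
              * AddMonoidAlgebra.single (tv v - tv s) (1:ℚ)))]
          · simp [Finset.mem_Icc, hwv]
  rw [Finset.sum_congr rfl step2]
  have step3 : ∀ w ∈ Finset.Icc u v,
      mob w v • (AddMonoidAlgebra.single (tv w - tv u) (1:ℚ)
        * AddMonoidAlgebra.single (tv v - tv w) (1:ℚ))
      = mob w v • AddMonoidAlgebra.single (tv v - tv u) (1:ℚ) := by
    intro w _
    rw [AddMonoidAlgebra.single_mul_single, one_mul]
    congr 2
    abel
  rw [Finset.sum_congr rfl step3, ← Finset.sum_smul, sum_mob_right hmob huv]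
  by_cases h : u = v <;> simp [h, AddMonoidAlgebra.one_def]

end Mob

section Main
variable [PartialOrder P] [LocallyFiniteOrder P] {mob : P → P → ℚ}

/-- Lemma (A): the convolution of θ with the vector `W` equals the delta at `y`. -/
lemma lemA (hmob : IsInvOn Set.univ zeta mob) (R : Set P) {u y : P} (huy : u ≤ y) :
    ∑ z ∈ Finset.Icc u y, theta mob u z *
      (recInv R (theta mob) z y +
        ∑ s ∈ (Finset.Ioc z y).filter (· ∉ R), thetaBar mob z s * recInv R (theta mob) s y)
      = if u = y then 1 else 0 := by
  have expand : ∑ z ∈ Finset.Icc u y, theta mob u z *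
      (recInv R (theta mob) z y +
        ∑ s ∈ (Finset.Ioc z y).filter (· ∉ R), thetaBar mob z s * recInv R (theta mob) s y)
      = (∑ z ∈ Finset.Icc u y, theta mob u z * recInv R (theta mob) z y)
        + ∑ z ∈ Finset.Icc u y, ∑ s ∈ (Finset.Ioc z y).filter (· ∉ R),
            theta mob u z * (thetaBar mob z s * recInv R (theta mob) s y) := by
    rw [← Finset.sum_add_distrib]
    apply Finset.sum_congr rfl
    intro z _
    rw [mul_add, Finset.mul_sum]
  rw [expand]
  -- swap the double sum
  have hswap : ∑ z ∈ Finset.Icc u y, ∑ s ∈ (Finset.Ioc z y).filter (· ∉ R),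
      theta mob u z * (thetaBar mob z s * recInv R (theta mob) s y)
      = ∑ s ∈ (Finset.Ioc u y).filter (· ∉ R), ∑ z ∈ Finset.Ico u s,
          theta mob u z * (thetaBar mob z s * recInv R (theta mob) s y) := by
    apply Finset.sum_comm'
    intro z s
    simp only [Finset.mem_Icc, Finset.mem_Ioc, Finset.mem_Ico, Finset.mem_filter]
    constructor
    · rintro ⟨⟨h1, h2⟩, ⟨⟨h3, h4⟩, h5⟩⟩
      exact ⟨⟨h1, h3⟩, ⟨⟨lt_of_le_of_lt h1 h3, h4⟩, h5⟩⟩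
    · rintro ⟨⟨h1, h2⟩, ⟨⟨h3, h4⟩, h5⟩⟩
      exact ⟨⟨h1, h2.le.trans h4⟩, ⟨⟨h2, h4⟩, h5⟩⟩
  rw [hswap]
  -- compute the inner sums
  have hinner : ∀ s ∈ (Finset.Ioc u y).filter (· ∉ R),
      ∑ z ∈ Finset.Ico u s, theta mob u z * (thetaBar mob z s * recInv R (theta mob) s y)
      = -(theta mob u s * recInv R (theta mob) s y) := by
    intro s hs
    obtain ⟨hs1, _⟩ := Finset.mem_filter.mp hs
    have hus : u < s := (Finset.mem_Ioc.mp hs1).1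
    have : ∑ z ∈ Finset.Ico u s, theta mob u z * (thetaBar mob z s * recInv R (theta mob) s y)
        = ∑ z ∈ Finset.Ico u s, (theta mob u z * thetaBar mob z s) * recInv R (theta mob) s y := by
      apply Finset.sum_congr rfl; intro z _; ring
    rw [this, ← Finset.sum_mul, ← Finset.Icc_erase_right,
      Finset.sum_erase_eq_sub (Finset.mem_Icc.mpr ⟨hus.le, le_refl s⟩),
      theta_conv hmob hus.le, if_neg (ne_of_lt hus), thetaBar_self hmob, mul_one, zero_sub, neg_mul]
  rw [Finset.sum_congr rfl hinner, Finset.sum_neg_distrib]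
  -- split the first sum at z = u and by membership in R
  have hsplit : ∑ z ∈ Finset.Icc u y, theta mob u z * recInv R (theta mob) z y
      = recInv R (theta mob) u y
        + (∑ z ∈ (Finset.Ioc u y).filter (· ∈ R), theta mob u z * recInv R (theta mob) z y
          + ∑ z ∈ (Finset.Ioc u y).filter (· ∉ R), theta mob u z * recInv R (theta mob) z y) := by
    rw [← Finset.add_sum_erase _ _ (Finset.mem_Icc.mpr ⟨le_refl u, huy⟩), Finset.Icc_erase_left,
      theta_self hmob, one_mul, Finset.sum_filter_add_sum_filter_not]
  rw [hsplit]
  have := recInv_recurrence R (theta mob) huy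
  linear_combination this
end Main

section Main2
variable [PartialOrder P] [LocallyFiniteOrder P] {mob : P → P → ℚ}

lemma diamond (hmob : IsInvOn Set.univ zeta mob) (R : Set P) (u y : P) (huy : u ≤ y) :
    recInv R (theta mob) u y +
      ∑ s ∈ (Finset.Ioc u y).filter (· ∉ R), thetaBar mob u s * recInv R (theta mob) s y
      = thetaBar mob u y := by
  have hA := lemA hmob R huy
  have hC := theta_conv hmob huy
  have h0 : ∑ z ∈ Finset.Icc u y, theta mob u z *
      ((recInv R (theta mob) z y +
        ∑ s ∈ (Finset.Ioc z y).filter (· ∉ R), thetaBar mob z s * recInv R (theta mob) s y)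
        - thetaBar mob z y) = 0 := by
    have : ∀ z ∈ Finset.Icc u y, theta mob u z *
        ((recInv R (theta mob) z y +
          ∑ s ∈ (Finset.Ioc z y).filter (· ∉ R), thetaBar mob z s * recInv R (theta mob) s y)
          - thetaBar mob z y)
        = theta mob u z *
          (recInv R (theta mob) z y +
            ∑ s ∈ (Finset.Ioc z y).filter (· ∉ R), thetaBar mob z s * recInv R (theta mob) s y)
          - theta mob u z * thetaBar mob z y := by
      intro z _; ring
    rw [Finset.sum_congr rfl this, Finset.sum_sub_distrib, hA, hC, sub_self]
  rw [← Finset.add_sum_erase _ _ (Finset.mem_Icc.mpr ⟨le_refl u, huy⟩),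
    Finset.Icc_erase_left, theta_self hmob, one_mul] at h0
  have hIH : ∀ z ∈ Finset.Ioc u y, theta mob u z *
      ((recInv R (theta mob) z y +
        ∑ s ∈ (Finset.Ioc z y).filter (· ∉ R), thetaBar mob z s * recInv R (theta mob) s y)
        - thetaBar mob z y) = 0 := by
    intro z hz
    rw [diamond hmob R z y (Finset.mem_Ioc.mp hz).2, sub_self, mul_zero]
  rw [Finset.sum_eq_zero hIH, add_zero, sub_eq_zero] at h0
  exact h0
  termination_by (Finset.Icc u y).card
  decreasing_by exact card_lt_of_mem_Ioc hz

lemma L2 (hmob : IsInvOn Set.univ zeta mob) (Q' : Set P) (y : P) (hyQ' : y ∈ Q')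
    (u : P) (hu : u ∈ Q') (huy : u ≤ y) (hne : u ≠ y) :
    recInv Q' (thetaBar mob) u y
      = - recInv {z | z ∉ Q' ∨ z = y} (theta mob) u y := by
  obtain ⟨R, hR⟩ : ∃ R : Set P, {z : P | z ∉ Q' ∨ z = y} = R := ⟨_, rfl⟩
  rw [hR]
  have hymem : y ∈ (Finset.Ioc u y).filter (· ∈ Q') :=
    Finset.mem_filter.mpr ⟨Finset.mem_Ioc.mpr ⟨lt_of_le_of_ne huy hne, le_refl y⟩, hyQ'⟩
  have herase : ((Finset.Ioc u y).filter (· ∈ Q')).erase y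
      = (Finset.Ioc u y).filter (· ∉ R) := by
    ext z
    simp only [Finset.mem_erase, Finset.mem_filter, ← hR, Set.mem_setOf_eq, not_or, not_not]
    tauto
  rw [recInv_eq Q' (thetaBar mob) hne,
    ← Finset.add_sum_erase _ _ hymem, herase, recInv_self]
  have hIH : ∀ z ∈ (Finset.Ioc u y).filter (· ∉ R),
      thetaBar mob u z * recInv Q' (thetaBar mob) z y
      = -(thetaBar mob u z * recInv R (theta mob) z y) := by
    intro z hz
    obtain ⟨hz1, hz2⟩ := Finset.mem_filter.mp hz
    rw [← hR] at hz2
    simp only [Set.mem_setOf_eq, not_or, not_not] at hz2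
    have hzQ' : z ∈ Q' := hz2.1
    have hzy : z ≠ y := hz2.2
    rw [L2 hmob Q' y hyQ' z hzQ' (Finset.mem_Ioc.mp hz1).2 hzy, hR, mul_neg]
  rw [Finset.sum_congr rfl hIH, Finset.sum_neg_distrib]
  have hdia := diamond hmob R u y huy
  linear_combination hdia
  termination_by (Finset.Icc u y).card
  decreasing_by exact card_lt_of_mem_Ioc hz1
end Main2

section Sigma
variable [PartialOrder P] [LocallyFiniteOrder P] {mob : P → P → ℚ}

lemma sigma_apply (p : AP P) :
    AddMonoidAlgebra.mapDomainRingHom ℚ (negAddMonoidHom : (P →₀ ℤ) →+ (P →₀ ℤ)) p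
      = AddMonoidAlgebra.mapDomain (fun g : P →₀ ℤ => -g) p := rfl

lemma sigma_single (g : P →₀ ℤ) (c : ℚ) :
    AddMonoidAlgebra.mapDomainRingHom ℚ (negAddMonoidHom : (P →₀ ℤ) →+ (P →₀ ℤ))
      (AddMonoidAlgebra.single g c) = AddMonoidAlgebra.single (-g) c := by
  rw [sigma_apply, AddMonoidAlgebra.mapDomain_single]

lemma sigma_smul (c : ℚ) (p : AP P) :
    AddMonoidAlgebra.mapDomainRingHom ℚ (negAddMonoidHom : (P →₀ ℤ) →+ (P →₀ ℤ)) (c • p)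
      = c • AddMonoidAlgebra.mapDomainRingHom ℚ (negAddMonoidHom : (P →₀ ℤ) →+ (P →₀ ℤ)) p := by
  rw [sigma_apply, sigma_apply]
  simp

lemma thetaBar_mul_single (u z y : P) :
    thetaBar mob u z * AddMonoidAlgebra.single (tv y - tv z) (1:ℚ)
      = AddMonoidAlgebra.single (tv y - tv u) (1:ℚ) *
          AddMonoidAlgebra.mapDomainRingHom ℚ (negAddMonoidHom : (P →₀ ℤ) →+ (P →₀ ℤ))
            (theta mob u z) := by
  rw [thetaBar, theta, Finset.sum_mul, map_sum, Finset.mul_sum]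
  apply Finset.sum_congr rfl
  intro w _
  rw [sigma_smul, sigma_single, smul_mul_assoc, mul_smul_comm,
    AddMonoidAlgebra.single_mul_single, AddMonoidAlgebra.single_mul_single]
  congr 2
  abel

lemma sigma_recInv (Q' : Set P) (u y : P) :
    recInv Q' (thetaBar mob) u y
      = AddMonoidAlgebra.single (tv y - tv u) (1:ℚ) *
          AddMonoidAlgebra.mapDomainRingHom ℚ (negAddMonoidHom : (P →₀ ℤ) →+ (P →₀ ℤ))
            (recInv Q' (theta mob) u y) := by
  by_cases h : u = y
  · subst h
    rw [recInv_self, recInv_self, map_one, mul_one, sub_self, ← AddMonoidAlgebra.one_def]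
  · have hstep : ∀ z ∈ (Finset.Ioc u y).filter (· ∈ Q'),
        thetaBar mob u z * recInv Q' (thetaBar mob) z y
        = AddMonoidAlgebra.single (tv y - tv u) (1:ℚ) *
            AddMonoidAlgebra.mapDomainRingHom ℚ (negAddMonoidHom : (P →₀ ℤ) →+ (P →₀ ℤ))
              (theta mob u z * recInv Q' (theta mob) z y) := by
      intro z hz
      rw [sigma_recInv Q' z y, map_mul, ← mul_assoc, thetaBar_mul_single u z y, mul_assoc]
    rw [recInv_eq Q' (thetaBar mob) h, Finset.sum_congr rfl hstep,
      recInv_eq Q' (theta mob) h, map_neg, map_sum, mul_neg, Finset.mul_sum]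
  termination_by (Finset.Icc u y).card
  decreasing_by exact card_lt_of_mem_Ioc (Finset.mem_filter.mp hz).1
end Sigma

/-- let `x < y` in `P` and let `Q, Q' ⊆ P` complement the interval `[x,y]_P`.
Then `Inv_Q θ (x, y; t) = -(t_y/t_x) · Inv_{Q'} θ (x, y; t⁻¹)`, where the substitution
`t ↦ t⁻¹` is realized on `A_P` as the map induced by negation of exponent vectors
(`Finsupp.mapDomain Neg.neg`).  Here `mob` is the Möbius function of `P` and
`invθ`, `invθ'` represent `Inv_Q θ`, `Inv_{Q'} θ`. -/
theorem statement10 [PartialOrder P] [LocallyFiniteOrder P]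
    (x y : P) (hxy : x < y) (Q Q' : Set P)
    (hxQ : x ∈ Q) (hyQ : y ∈ Q) (hxQ' : x ∈ Q') (hyQ' : y ∈ Q')
    (hcompl : ∀ z : P, x < z → z < y → ((z ∈ Q) ↔ ¬ (z ∈ Q')))
    (mob : P → P → ℚ) (hmob : IsInvOn Set.univ zeta mob)
    (invθ : P → P → AP P) (hinvθ : IsInvOn Q (theta mob) invθ)
    (invθ' : P → P → AP P) (hinvθ' : IsInvOn Q' (theta mob) invθ') :
    invθ x y =
      - (AddMonoidAlgebra.single (tv y - tv x) (1 : ℚ)) *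
        (show AP P from AddMonoidAlgebra.mapDomain (fun g : P →₀ ℤ => -g) (invθ' x y)) := by

  have hd : ∀ Q₀ : Set P, ∀ z ∈ Q₀, theta mob z z = 1 := fun _ z _ => theta_self hmob z
  have h1 : invθ x y = recInv Q (theta mob) x y :=
    eq_recInv Q (theta mob) invθ (hd Q)
      (fun u hu v hv _ => hinvθ.2.1 u hu v hv) x y hxQ hyQ hxy.le
  have h2 : invθ' x y = recInv Q' (theta mob) x y :=
    eq_recInv Q' (theta mob) invθ' (hd Q')
      (fun u hu v hv _ => hinvθ'.2.1 u hu v hv) x y hxQ' hyQ' hxy.le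
  have hcongr : recInv Q (theta mob) x y
      = recInv {z : P | z ∉ Q' ∨ z = y} (theta mob) x y := by
    apply recInv_congr
    intro z hz
    obtain ⟨hz1, hz2⟩ := Finset.mem_Ioc.mp hz
    simp only [Set.mem_setOf_eq]
    rcases eq_or_lt_of_le hz2 with hzy | hzy
    · subst hzy
      simp [hyQ]
    · rw [hcompl z hz1 hzy]
      constructor
      · exact fun h => Or.inl h
      · rintro (h | h)
        · exact h
        · exact absurd h (ne_of_lt hzy)
  have hL2 : recInv Q' (thetaBar mob) x y
      = - recInv {z : P | z ∉ Q' ∨ z = y} (theta mob) x y :=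
    L2 hmob Q' y hyQ' x hxQ' hxy.le (ne_of_lt hxy)
  have hσ := sigma_recInv (mob := mob) Q' x y
  rw [h1, hcongr]
  have hkey : recInv {z : P | z ∉ Q' ∨ z = y} (theta mob) x y
      = - recInv Q' (thetaBar mob) x y := by rw [hL2, neg_neg]
  rw [hkey, hσ, h2, sigma_apply]
  ring
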